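/- Let x be a sequence of length n and let i, j ∈ {1,…,n−1} with i ≠ j. Then NG(x,i) ∩ NG(x,j) = ∅; consequently |NG(x)| = Σ_{i=1}^{n−1} |NG(x,i)|. -/

import Mathlib

/-- A sequence of length `n`: a function `ℕ → ℤ` injective on positions `1,…,n`. -/
def IsSeq (n : ℕ) (x : ℕ → ℤ) : Prop := Set.InjOn x (Set.Icc 1 n)

/-- Parent-distance table: `fwdPD x i = i - max{ j | 1 ≤ j < i, x j < x i }` if such `j`
exists, `0` otherwise. -/
def fwdPD (x : ℕ → ℤ) (i : ℕ) : ℕ :=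
  if h : ((Finset.Ico 1 i).filter (fun j => x j < x i)).Nonempty then
    i - ((Finset.Ico 1 i).filter (fun j => x j < x i)).max' h
  else 0

/-- Reverse parent-distance table: `revPD n x i = min{ j | i < j ≤ n, x j < x i } - i` if
such `j` exists, `0` otherwise. -/
def revPD (n : ℕ) (x : ℕ → ℤ) (i : ℕ) : ℕ :=
  if h : ((Finset.Ioc i n).filter (fun j => x j < x i)).Nonempty then
    ((Finset.Ioc i n).filter (fun j => x j < x i)).min' h - i
  else 0

/-- The swap `τ(x,i)`: exchanges positions `i` and `i+1`. -/
def swapSeq (x : ℕ → ℤ) (i : ℕ) : ℕ → ℤ :=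
  fun j => if j = i then x (i + 1) else if j = i + 1 then x i else x j

/-- The parent-distance table of a sequence of length `n`, as a function on `Fin n`
(position `k : Fin n` corresponds to index `k+1 ∈ {1,…,n}`). -/
def PDvec (n : ℕ) (x : ℕ → ℤ) : Fin n → ℕ := fun k => fwdPD x (k.1 + 1)

/-- `NGat n x i` is the set of parent-distance tables obtained by a swap at position `i`
(`1 ≤ i ≤ n-1`) from some sequence `z` having the same Cartesian tree (i.e. the same
parent-distance table) as `x`; it is empty for `i` out of range. -/
def NGat (n : ℕ) (x : ℕ → ℤ) (i : ℕ) : Set (Fin n → ℕ) :=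
  {P | 1 ≤ i ∧ i + 1 ≤ n ∧
    ∃ z, IsSeq n z ∧ PDvec n z = PDvec n x ∧ P = PDvec n (swapSeq z i)}

/-- The neighborhood of (the Cartesian tree of) `x` in the swap graph. -/
def NG (n : ℕ) (x : ℕ → ℤ) : Set (Fin n → ℕ) := ⋃ i, NGat n x i


lemma fwdPD_eq_zero_iff (u : ℕ → ℤ) (k : ℕ) :
    fwdPD u k = 0 ↔ ∀ j, 1 ≤ j → j < k → ¬ u j < u k := by
  unfold fwdPD
  split_ifs with h
  · constructor
    · intro h0
      have hmem := Finset.max'_mem _ h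
      have h1 := (Finset.mem_Ico.mp (Finset.mem_filter.mp hmem).1).1
      have h2 := (Finset.mem_Ico.mp (Finset.mem_filter.mp hmem).1).2
      omega
    · intro hall
      exfalso
      obtain ⟨j, hj⟩ := h
      have h1 := Finset.mem_Ico.mp (Finset.mem_filter.mp hj).1
      exact hall j h1.1 h1.2 (Finset.mem_filter.mp hj).2
  · simp only [Finset.not_nonempty_iff_eq_empty, Finset.filter_eq_empty_iff] at h
    refine ⟨fun _ j h1 h2 hlt => h (Finset.mem_Ico.mpr ⟨h1, h2⟩) hlt, fun _ => rfl⟩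

lemma fwdPD_eq_sub_iff (u : ℕ → ℤ) (k m : ℕ) (h1 : 1 ≤ m) (hm : m < k) :
    fwdPD u k = k - m ↔ (u m < u k ∧ ∀ j, m < j → j < k → ¬ u j < u k) := by
  unfold fwdPD
  split_ifs with h
  · have hmem := Finset.max'_mem _ h
    have hmax1 := (Finset.mem_Ico.mp (Finset.mem_filter.mp hmem).1).1
    have hmaxk := (Finset.mem_Ico.mp (Finset.mem_filter.mp hmem).1).2
    constructor
    · intro he
      have heq : ((Finset.Ico 1 k).filter (fun j => u j < u k)).max' h = m := by omega
      refine ⟨heq ▸ (Finset.mem_filter.mp hmem).2, ?_⟩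
      intro j hj1 hj2 hlt
      have hjS : j ∈ (Finset.Ico 1 k).filter (fun j => u j < u k) :=
        Finset.mem_filter.mpr ⟨Finset.mem_Ico.mpr ⟨by omega, hj2⟩, hlt⟩
      have := Finset.le_max' _ j hjS
      omega
    · rintro ⟨hlt, hall⟩
      have hmS : m ∈ (Finset.Ico 1 k).filter (fun j => u j < u k) :=
        Finset.mem_filter.mpr ⟨Finset.mem_Ico.mpr ⟨h1, hm⟩, hlt⟩
      have h1' := Finset.le_max' _ m hmS
      have h2' : ((Finset.Ico 1 k).filter (fun j => u j < u k)).max' h ≤ m := by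
        by_contra hc
        exact hall _ (by omega) hmaxk (Finset.mem_filter.mp hmem).2
      omega
  · constructor
    · intro he; omega
    · rintro ⟨hlt, -⟩
      exact absurd ⟨m, Finset.mem_filter.mpr ⟨Finset.mem_Ico.mpr ⟨h1, hm⟩, hlt⟩⟩ h

lemma fwdPD_extract (u : ℕ → ℤ) (k d : ℕ) (hd : fwdPD u k = d) (h1 : 1 ≤ d) :
    1 ≤ k - d ∧ k - d < k ∧ u (k - d) < u k ∧ ∀ j, k - d < j → j < k → ¬ u j < u k := by
  unfold fwdPD at hd
  split_ifs at hd with h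
  · have hmem := Finset.max'_mem _ h
    have hmax1 := (Finset.mem_Ico.mp (Finset.mem_filter.mp hmem).1).1
    have hmaxk := (Finset.mem_Ico.mp (Finset.mem_filter.mp hmem).1).2
    have heq : k - d = ((Finset.Ico 1 k).filter (fun j => u j < u k)).max' h := by omega
    refine ⟨by omega, by omega, heq ▸ (Finset.mem_filter.mp hmem).2, ?_⟩
    intro j hj1 hj2 hlt
    have hjS : j ∈ (Finset.Ico 1 k).filter (fun j => u j < u k) :=
      Finset.mem_filter.mpr ⟨Finset.mem_Ico.mpr ⟨by omega, hj2⟩, hlt⟩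
    have := Finset.le_max' _ j hjS
    omega
  · omega

lemma fwdPD_congr (u v : ℕ → ℤ) (k : ℕ) (hk : 1 ≤ k)
    (h : ∀ j, 1 ≤ j → j ≤ k → u j = v j) : fwdPD u k = fwdPD v k := by
  unfold fwdPD
  have hfil : (Finset.Ico 1 k).filter (fun j => u j < u k)
      = (Finset.Ico 1 k).filter (fun j => v j < v k) := by
    apply Finset.filter_congr
    intro j hj
    have hj' := Finset.mem_Ico.mp hj
    rw [h j hj'.1 (by omega), h k hk le_rfl]
  simp only [hfil]

lemma fwdPD_succ_eq_one_iff (u : ℕ → ℤ) (m : ℕ) (h1 : 1 ≤ m) :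
    fwdPD u (m+1) = 1 ↔ u m < u (m+1) := by
  have h := fwdPD_eq_sub_iff u (m+1) m h1 (by omega)
  have e : m + 1 - m = 1 := by omega
  rw [e] at h
  rw [h]
  exact ⟨fun hh => hh.1, fun hh => ⟨hh, fun j hj1 hj2 => by omega⟩⟩

lemma fwdPD_le (u : ℕ → ℤ) (k : ℕ) : fwdPD u k ≤ k := by
  unfold fwdPD; split_ifs <;> omega

lemma swapSeq_fst (x : ℕ → ℤ) (i : ℕ) : swapSeq x i i = x (i+1) := by
  simp [swapSeq]

lemma swapSeq_snd (x : ℕ → ℤ) (i : ℕ) : swapSeq x i (i+1) = x i := by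
  unfold swapSeq
  rw [if_neg (by omega), if_pos rfl]

lemma swapSeq_other (x : ℕ → ℤ) (i j : ℕ) (h1 : j ≠ i) (h2 : j ≠ i+1) :
    swapSeq x i j = x j := by
  simp [swapSeq, h1, h2]

/-- read off equality of fwdPD from equality of PDvec -/
lemma pdvec_eq (n : ℕ) {u v : ℕ → ℤ} (h : PDvec n u = PDvec n v) :
    ∀ m, 1 ≤ m → m ≤ n → fwdPD u m = fwdPD v m := by
  intro m h1 h2
  have := congrFun h ⟨m - 1, by omega⟩
  simpa [PDvec, Nat.sub_add_cancel h1] using this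

lemma NGat_disjoint (n : ℕ) (x : ℕ → ℤ) (i j : ℕ) (hi1 : 1 ≤ i) (hij : i < j)
    (hj2 : j + 1 ≤ n) : NGat n x i ∩ NGat n x j = ∅ := by
  ext P
  simp only [Set.mem_inter_iff, Set.mem_empty_iff_false, iff_false]
  rintro ⟨⟨-, -, z, hz, hzx, hPz⟩, ⟨hj1, -, w, hw, hwx, hPw⟩⟩
  -- common equalities
  have hP : ∀ m, 1 ≤ m → m ≤ n → fwdPD (swapSeq z i) m = fwdPD (swapSeq w j) m :=
    pdvec_eq n (hPz ▸ hPw ▸ rfl)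
  have hzw : ∀ m, 1 ≤ m → m ≤ n → fwdPD z m = fwdPD w m := by
    intro m h1 h2
    rw [pdvec_eq n hzx m h1 h2, pdvec_eq n hwx m h1 h2]
  have hnez : z i ≠ z (i+1) := by
    intro he
    have := hz (Set.mem_Icc.mpr ⟨hi1, by omega⟩) (Set.mem_Icc.mpr ⟨by omega, by omega⟩) he
    omega
  -- value-1 criteria for the swapped z at position i+1
  have hA : fwdPD (swapSeq z i) (i+1) = 1 ↔ z (i+1) < z i := by
    rw [fwdPD_succ_eq_one_iff _ i hi1, swapSeq_fst, swapSeq_snd]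
  have hC : fwdPD z (i+1) = 1 ↔ z i < z (i+1) := fwdPD_succ_eq_one_iff z i hi1
  rcases Nat.lt_or_ge (i+1) j with hcase | hcase
  · -- j ≥ i + 2 : positions below j are untouched by the w-swap
    have hB : fwdPD (swapSeq w j) (i+1) = fwdPD w (i+1) := by
      apply fwdPD_congr _ _ _ (by omega)
      intro m hm1 hm2
      exact swapSeq_other w j m (by omega) (by omega)
    have hD : fwdPD w (i+1) = fwdPD z (i+1) := (hzw (i+1) (by omega) (by omega)).symm
    have hE := hP (i+1) (by omega) (by omega)
    rcases hnez.lt_or_gt with h | h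
    · have h1 : fwdPD z (i+1) = 1 := hC.mpr h
      have : fwdPD (swapSeq z i) (i+1) = 1 := by omega
      have := hA.mp this
      omega
    · have h1 : fwdPD (swapSeq z i) (i+1) = 1 := hA.mpr h
      have : fwdPD z (i+1) = 1 := by omega
      have := hC.mp this
      omega
  · -- j = i + 1
    have hji : j = i + 1 := by omega
    subst hji
    have hnew : w (i+1) ≠ w (i+2) := by
      intro he
      have := hw (Set.mem_Icc.mpr ⟨by omega, by omega⟩)
        (Set.mem_Icc.mpr ⟨by omega, by omega⟩) he
      omega
    have hnew2 : w i ≠ w (i+1) := by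
      intro he
      have := hw (Set.mem_Icc.mpr ⟨hi1, by omega⟩)
        (Set.mem_Icc.mpr ⟨by omega, by omega⟩) he
      omega
    have hnew3 : w i ≠ w (i+2) := by
      intro he
      have := hw (Set.mem_Icc.mpr ⟨hi1, by omega⟩)
        (Set.mem_Icc.mpr ⟨by omega, by omega⟩) he
      omega
    have hnez2 : z (i+1) ≠ z (i+2) := by
      intro he
      have := hz (Set.mem_Icc.mpr ⟨by omega, by omega⟩)
        (Set.mem_Icc.mpr ⟨by omega, by omega⟩) he
      omega
    have hnez3 : z i ≠ z (i+2) := by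
      intro he
      have := hz (Set.mem_Icc.mpr ⟨hi1, by omega⟩)
        (Set.mem_Icc.mpr ⟨by omega, by omega⟩) he
      omega
    -- E1 w-side: fwdPD (swapSeq w (i+1)) (i+1) = 1 ↔ w i < w (i+2)
    have hA' : fwdPD (swapSeq w (i+1)) (i+1) = 1 ↔ w i < w (i+2) := by
      rw [fwdPD_succ_eq_one_iff _ i hi1,
        swapSeq_other w (i+1) i (by omega) (by omega), swapSeq_fst]
    -- E2
    have hC' : fwdPD w (i+1) = 1 ↔ w i < w (i+1) := fwdPD_succ_eq_one_iff w i hi1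
    have hCzw : fwdPD z (i+1) = fwdPD w (i+1) := hzw (i+1) (by omega) (by omega)
    -- E3
    have hE3z : fwdPD (swapSeq z i) (i+2) = 1 ↔ z i < z (i+2) := by
      rw [show i+2 = (i+1)+1 from rfl, fwdPD_succ_eq_one_iff _ (i+1) (by omega),
        swapSeq_snd, swapSeq_other z i (i+2) (by omega) (by omega)]
    have hE3w : fwdPD (swapSeq w (i+1)) (i+2) = 1 ↔ w (i+2) < w (i+1) := by
      rw [show i+2 = (i+1)+1 from rfl, fwdPD_succ_eq_one_iff _ (i+1) (by omega),
        swapSeq_fst, swapSeq_snd]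
    -- E4
    have hE4z : fwdPD z (i+2) = 1 ↔ z (i+1) < z (i+2) := by
      rw [show i+2 = (i+1)+1 from rfl]
      exact fwdPD_succ_eq_one_iff z (i+1) (by omega)
    have hE4w : fwdPD w (i+2) = 1 ↔ w (i+1) < w (i+2) := by
      rw [show i+2 = (i+1)+1 from rfl]
      exact fwdPD_succ_eq_one_iff w (i+1) (by omega)
    have hE4zw : fwdPD z (i+2) = fwdPD w (i+2) := hzw (i+2) (by omega) (by omega)
    have hP1 := hP (i+1) (by omega) (by omega)
    have hP2 := hP (i+2) (by omega) (by omega)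
    rcases hnez.lt_or_gt with hab | hab
    · -- z i < z (i+1)
      have hw1 : w i < w (i+1) := hC'.mp (by rw [← hCzw]; exact hC.mpr hab)
      have hy1 : fwdPD (swapSeq z i) (i+1) ≠ 1 := fun h => absurd (hA.mp h) (by omega)
      have hwc : w (i+2) < w i := by
        rcases hnew3.lt_or_gt with h | h
        · exact absurd (hA'.mpr h) (by omega)
        · exact h
      -- fwdPD (swap w (i+1)) (i+2) = 1, so z i < z (i+2)
      have hv2 : fwdPD (swapSeq w (i+1)) (i+2) = 1 := hE3w.mpr (by linarith)
      have hzc : z i < z (i+2) := hE3z.mp (by omega)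
      -- fwdPD w (i+2) is not 1 and not 2
      have hd1 : fwdPD w (i+2) ≠ 1 := fun h => absurd (hE4w.mp h) (by linarith)
      have hd2 : fwdPD w (i+2) ≠ 2 := by
        intro h
        have := (fwdPD_eq_sub_iff w (i+2) i hi1 (by omega)).mp (by omega)
        linarith [this.1]
      -- contradiction with fwdPD z (i+2)
      rcases Nat.eq_zero_or_pos (fwdPD z (i+2)) with h0 | h0
      · exact (fwdPD_eq_zero_iff z (i+2)).mp h0 i hi1 (by omega) hzc
      · obtain ⟨hm1, hm2, hm3, hm4⟩ := fwdPD_extract z (i+2) _ rfl h0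
        have hd : 3 ≤ fwdPD z (i+2) := by omega
        exact hm4 i (by omega) (by omega) hzc
    · -- z (i+1) < z i
      have hw1 : w (i+1) < w i := by
        rcases hnew2.lt_or_gt with h | h
        · have := hC.mp ?_ ; · omega
          rw [hCzw]; exact hC'.mpr h
        · exact h
      have hy1 : fwdPD (swapSeq z i) (i+1) = 1 := hA.mpr hab
      have hwc : w i < w (i+2) := hA'.mp (by omega)
      have hwd : w (i+1) < w (i+2) := by linarith
      have hz2 : fwdPD z (i+2) = 1 := by rw [hE4zw]; exact hE4w.mpr hwd
      have hzc2 : z (i+1) < z (i+2) := hE4z.mp hz2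
      have hzc3 : z (i+2) < z i := by
        rcases hnez3.lt_or_gt with h | h
        · have := hE3z.mpr h
          have hvne : fwdPD (swapSeq w (i+1)) (i+2) = 1 := by omega
          exact absurd (hE3w.mp hvne) (by linarith)
        · exact h
      -- fwdPD (swap z i) (i+2) = 2
      have hy2 : fwdPD (swapSeq z i) (i+2) = (i+2) - i := by
        rw [fwdPD_eq_sub_iff _ (i+2) i hi1 (by omega)]
        constructor
        · rw [swapSeq_fst, swapSeq_other z i (i+2) (by omega) (by omega)]
          exact hzc2
        · intro j hj1 hj2 hlt
          have hj : j = i + 1 := by omega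
          subst hj
          rw [swapSeq_snd, swapSeq_other z i (i+2) (by omega) (by omega)] at hlt
          exact absurd hlt (by linarith)
      -- but fwdPD (swap w (i+1)) (i+2) ≠ 2
      have hd := fwdPD w (i+1)
      have hdne1 : fwdPD w (i+1) ≠ 1 := fun h => absurd (hC'.mp h) (by linarith)
      rcases Nat.eq_zero_or_pos (fwdPD w (i+1)) with h0 | h0
      · have hv0 : fwdPD (swapSeq w (i+1)) (i+2) = 0 := by
          rw [fwdPD_eq_zero_iff]
          intro j hj1 hj2
          rw [show swapSeq w (i+1) (i+2) = w (i+1) from swapSeq_snd w (i+1)]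
          rcases Nat.lt_or_ge j (i+1) with hj | hj
          · rw [swapSeq_other w (i+1) j (by omega) (by omega)]
            exact (fwdPD_eq_zero_iff w (i+1)).mp h0 j hj1 hj
          · have hj' : j = i + 1 := by omega
            subst hj'
            rw [swapSeq_fst]
            exact not_lt.mpr (le_of_lt hwd)
        omega
      · obtain ⟨hm1, hm2, hm3, hm4⟩ := fwdPD_extract w (i+1) _ rfl h0
        set m := i + 1 - fwdPD w (i+1) with hmdef
        have hdge2 : 2 ≤ fwdPD w (i+1) := by omega
        have hmlt : m < i := by omega
        have hv : fwdPD (swapSeq w (i+1)) (i+2) = (i+2) - m := by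
          rw [fwdPD_eq_sub_iff _ (i+2) m hm1 (by omega)]
          constructor
          · rw [swapSeq_other w (i+1) m (by omega) (by omega),
              show swapSeq w (i+1) (i+2) = w (i+1) from swapSeq_snd w (i+1)]
            exact hm3
          · intro j hj1 hj2 hlt
            rw [show swapSeq w (i+1) (i+2) = w (i+1) from swapSeq_snd w (i+1)] at hlt
            rcases Nat.lt_or_ge j (i+1) with hj | hj
            · rw [swapSeq_other w (i+1) j (by omega) (by omega)] at hlt
              exact hm4 j hj1 hj hlt
            · have hj' : j = i + 1 := by omega
              subst hj'
              rw [swapSeq_fst] at hlt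
              exact absurd hlt (by linarith)
        omega


lemma NGat_finite (n : ℕ) (x : ℕ → ℤ) (i : ℕ) : (NGat n x i).Finite := by
  apply Set.Finite.subset (Set.Finite.pi (fun _ : Fin n => Set.finite_Iic n))
  rintro P ⟨-, -, z, -, -, hP⟩
  intro k _
  subst hP
  simp only [Set.mem_Iic, PDvec]
  have := fwdPD_le (swapSeq z i) (k.1 + 1)
  have := k.2
  omega

theorem stmt11 (n : ℕ) (x : ℕ → ℤ) (hx : IsSeq n x) :
    (∀ i j : ℕ, 1 ≤ i → i + 1 ≤ n → 1 ≤ j → j + 1 ≤ n → i ≠ j →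
      NGat n x i ∩ NGat n x j = ∅) ∧
    (NG n x).ncard = ∑ i ∈ Finset.Icc 1 (n - 1), (NGat n x i).ncard := by
  classical
  have part1 : ∀ i j : ℕ, 1 ≤ i → i + 1 ≤ n → 1 ≤ j → j + 1 ≤ n → i ≠ j →
      NGat n x i ∩ NGat n x j = ∅ := by
    intro i j hi1 hi2 hj1 hj2 hne
    rcases hne.lt_or_gt with h | h
    · exact NGat_disjoint n x i j hi1 h hj2
    · rw [Set.inter_comm]
      exact NGat_disjoint n x j i hj1 h hi2
  refine ⟨part1, ?_⟩
  have hfin : ∀ i, (NGat n x i).Finite := NGat_finite n x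
  have hNG : NG n x = ↑((Finset.Icc 1 (n-1)).biUnion fun i => (hfin i).toFinset) := by
    ext P
    simp only [NG, Set.mem_iUnion, Finset.coe_biUnion, Finset.mem_coe,
      Finset.mem_Icc, Set.Finite.coe_toFinset]
    constructor
    · rintro ⟨i, hP⟩
      have h2 := hP.2.1
      exact ⟨i, ⟨hP.1, by omega⟩, hP⟩
    · rintro ⟨i, -, hP⟩
      exact ⟨i, hP⟩
  rw [hNG, Set.ncard_coe_finset]
  rw [Finset.card_biUnion]
  · apply Finset.sum_congr rfl
    intro i _
    exact (Set.ncard_eq_toFinset_card _ (hfin i)).symm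
  · intro i hi j hj hne
    rw [Finset.mem_coe, Finset.mem_Icc] at hi hj
    rw [Function.onFun, Finset.disjoint_left]
    intro a ha hb
    rw [Set.Finite.mem_toFinset] at ha hb
    have := part1 i j hi.1 (by omega) hj.1 (by omega) hne
    have : a ∈ NGat n x i ∩ NGat n x j := ⟨ha, hb⟩
    simp_all
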